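/- Let φ: G → H be a coarse embedding and let L ⊆ C(G,W) be a res-invariant RG-submodule. Then φ^{*-1}L := {f ∈ C(H,W) : φ*(h.f) ∈ L for all h ∈ H} is a res-invariant RH-submodule of C(H,W), and it is the largest res-invariant RH-submodule M of C(H,W) such that φ*(f) ∈ L for all f ∈ M. -/

import Mathlib

def CoarseEmbedding {G H : Type*} [Group G] [Group H] (φ : G → H) : Prop :=
  ∀ S : Set (G × G), ((fun p : G × G => p.1 * p.2⁻¹) '' S).Finite ↔
    ((fun p : G × G => φ p.1 * (φ p.2)⁻¹) '' S).Finite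

def IsResInvariant {G : Type*} [Group G] (R : Type*) [CommRing R]
    {W : Type*} [AddCommGroup W] [Module R W] (L : Submodule R (G → W)) : Prop :=
  (∀ g : G, ∀ f ∈ L, (fun x => f (g⁻¹ * x)) ∈ L) ∧
  (∀ f ∈ L, ∀ A : Set G, A.indicator f ∈ L)

theorem preInvMod_resInvariant_and_largest {G H : Type*} [Group G] [Group H]
    (R : Type*) [CommRing R] {W : Type*} [AddCommGroup W] [Module R W]
    (φ : G → H) (hφ : CoarseEmbedding φ)
    (L : Submodule R (G → W)) (hL : IsResInvariant R L) :
    ∃ N : Submodule R (H → W),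
      (N : Set (H → W)) = {f : H → W | ∀ h : H, (fun x : G => f (h⁻¹ * φ x)) ∈ L} ∧
      IsResInvariant R N ∧
      ∀ M : Submodule R (H → W), IsResInvariant R M →
        (∀ f ∈ M, (fun x : G => f (φ x)) ∈ L) → M ≤ N := by
  refine ⟨{ carrier := {f : H → W | ∀ h : H, (fun x : G => f (h⁻¹ * φ x)) ∈ L}
            add_mem' := fun hf hg h => L.add_mem (hf h) (hg h)
            zero_mem' := fun h => L.zero_mem
            smul_mem' := fun c f hf h => L.smul_mem c (hf h) }, rfl, ⟨?_, ?_⟩, ?_⟩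
  · intro h₀ f hf h
    have := hf (h * h₀)
    simpa [mul_assoc, mul_inv_rev] using this
  · intro f hf A h
    have := hL.2 _ (hf h) {x : G | h⁻¹ * φ x ∈ A}
    convert this using 1
    ext x; simp [Set.indicator]
  · intro M hM hML f hf h
    exact hML _ (hM.1 h f hf)
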